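/- Let (V,q) be a finite weighted graph satisfying CD(0,n) for some finite n, and let (u_t)_{t≥0} solve ∂_t u_t = Δu_t + Γu_t with ‖Γu_0‖_∞ ≤ q_min/2. Then for all x, y ∈ V and all 0 < T₁ < T₂: u_{T₁}(x) − u_{T₂}(y) ≤ (n/2)·log(T₂/T₁) + 2·d(x,y)²/(q_min·(T₂ − T₁)), where d is the combinatorial graph distance. -/

import Mathlib

open Finset Real

set_option maxHeartbeats 1000000

/-- Graph Laplacian on a finite weighted graph. -/
noncomputable def glap {V : Type*} [Fintype V] (q : V → V → ℝ) (f : V → ℝ) (x : V) : ℝ :=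
  ∑ y, q x y * (f y - f x)

/-- Carré du champ operator Γ(f,g). -/
noncomputable def gGammaBil {V : Type*} [Fintype V] (q : V → V → ℝ) (f g : V → ℝ) (x : V) : ℝ :=
  (1 / 2) * ∑ y, q x y * (f y - f x) * (g y - g x)

/-- Carré du champ Γf = Γ(f,f). -/
noncomputable def gGamma {V : Type*} [Fintype V] (q : V → V → ℝ) (f : V → ℝ) (x : V) : ℝ :=
  gGammaBil q f f x

/-- Iterated carré du champ Γ₂f = (ΔΓf − 2Γ(f,Δf))/2. -/
noncomputable def gGammaTwo {V : Type*} [Fintype V] (q : V → V → ℝ) (f : V → ℝ) (x : V) : ℝ :=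
  (glap q (gGamma q f) x - 2 * gGammaBil q f (glap q f) x) / 2

/-- The underlying simple graph of a weighted graph: x ∼ y iff q(x,y) > 0 or q(y,x) > 0. -/
def graphOf {V : Type*} [Fintype V] (q : V → V → ℝ) : SimpleGraph V where
  Adj x y := x ≠ y ∧ (0 < q x y ∨ 0 < q y x)
  symm := ⟨fun x y h => ⟨h.1.symm, h.2.symm⟩⟩
  loopless := ⟨fun x h => h.1 rfl⟩

section Aux
variable {V : Type*} [Fintype V] {q : V → V → ℝ}

lemma gGamma_nonneg (hq : ∀ x y, 0 ≤ q x y) (f : V → ℝ) (x : V) : 0 ≤ gGamma q f x := by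
  unfold gGamma gGammaBil
  have h : ∀ y ∈ Finset.univ, (0:ℝ) ≤ q x y * (f y - f x) * (f y - f x) := by
    intro y _; nlinarith [hq x y, mul_self_nonneg (f y - f x)]
  have := Finset.sum_nonneg h
  linarith

/-- single edge estimate: q x y * (f y - f x)^2 ≤ 2 Γf(x) -/
lemma edge_sq_le (hq : ∀ x y, 0 ≤ q x y) (f : V → ℝ) (x y : V) :
    q x y * (f y - f x) ^ 2 ≤ 2 * gGamma q f x := by
  unfold gGamma gGammaBil
  have h : ∀ z ∈ Finset.univ, (0:ℝ) ≤ q x z * (f z - f x) * (f z - f x) := by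
    intro z _; nlinarith [hq x z, mul_self_nonneg (f z - f x)]
  have := Finset.single_le_sum h (Finset.mem_univ y)
  nlinarith [this]

/-- max-point bilinear estimate -/
lemma bil_max_bound (hq : ∀ x y, 0 ≤ q x y) (w f : V → ℝ) (x : V) (β : ℝ)
    (hw : ∀ y, 0 < q x y → |w y - w x| ≤ β) (hf : ∀ y, f y ≤ f x) :
    2 * gGammaBil q w f x ≤ β * (∑ y, q x y * (f x - f y)) := by
  unfold gGammaBil
  have h : ∀ y ∈ Finset.univ,
      q x y * (w y - w x) * (f y - f x) ≤ β * (q x y * (f x - f y)) := by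
    intro y _
    rcases eq_or_lt_of_le (hq x y) with h0 | h0
    · rw [← h0]; ring_nf; simp
    · have h1 := hw y h0
      have h2 := hf y
      have h3 : (w y - w x) * (f y - f x) ≤ β * (f x - f y) := by
        have := abs_nonneg (w y - w x)
        nlinarith [neg_abs_le (w y - w x), le_abs_self (w y - w x)]
      nlinarith
  have h2 := Finset.sum_le_sum h
  rw [← Finset.mul_sum] at h2
  linarith

end Aux

noncomputable def udotF {V : Type*} [Fintype V] (q : V → V → ℝ) (u : ℝ → V → ℝ) (t : ℝ)
    (x : V) : ℝ := glap q (u t) x + gGamma q (u t) x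

section Deriv
variable {V : Type*} [Fintype V] {q : V → V → ℝ} {u : ℝ → V → ℝ}

lemma glap_add (f g : V → ℝ) (x : V) :
    glap q (fun z => f z + g z) x = glap q f x + glap q g x := by
  unfold glap
  rw [← Finset.sum_add_distrib]
  exact Finset.sum_congr rfl fun y _ => by ring

lemma bil_add (w f g : V → ℝ) (x : V) :
    gGammaBil q w (fun z => f z + g z) x = gGammaBil q w f x + gGammaBil q w g x := by
  unfold gGammaBil
  rw [← mul_add, ← Finset.sum_add_distrib]
  exact congrArg _ (Finset.sum_congr rfl fun y _ => by ring)

lemma bil_glap (f : V → ℝ) (x : V) :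
    2 * gGammaBil q f (glap q f) x = glap q (gGamma q f) x - 2 * gGammaTwo q f x := by
  unfold gGammaTwo; ring

variable (hu : ∀ t ∈ Set.Ici (0 : ℝ), ∀ x, HasDerivWithinAt (fun s => u s x)
      (glap q (u t) x + gGamma q (u t) x) (Set.Ici 0) t)
include hu

lemma hderiv_u {t : ℝ} (ht : t ∈ Set.Ici (0:ℝ)) (x : V) :
    HasDerivWithinAt (fun s => u s x) (udotF q u t x) (Set.Ici 0) t := hu t ht x

lemma hderiv_glap {t : ℝ} (ht : t ∈ Set.Ici (0:ℝ)) (x : V) :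
    HasDerivWithinAt (fun s => glap q (u s) x) (glap q (udotF q u t) x) (Set.Ici 0) t := by
  have H : HasDerivWithinAt (fun s => ∑ y, q x y * (u s y - u s x))
      (∑ y, q x y * (udotF q u t y - udotF q u t x)) (Set.Ici 0) t := by
    apply HasDerivWithinAt.fun_sum
    intro y _
    exact ((hderiv_u hu ht y).sub (hderiv_u hu ht x)).const_mul _
  exact H

lemma hderiv_gGamma {t : ℝ} (ht : t ∈ Set.Ici (0:ℝ)) (x : V) :
    HasDerivWithinAt (fun s => gGamma q (u s) x)
      (2 * gGammaBil q (u t) (udotF q u t) x) (Set.Ici 0) t := by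
  have H : HasDerivWithinAt
      (fun s => (1/2 : ℝ) * ∑ y, q x y * (u s y - u s x) * (u s y - u s x))
      ((1/2) * ∑ y, (q x y * (udotF q u t y - udotF q u t x) * (u t y - u t x)
        + q x y * (u t y - u t x) * (udotF q u t y - udotF q u t x))) (Set.Ici 0) t := by
    apply HasDerivWithinAt.const_mul
    apply HasDerivWithinAt.fun_sum
    intro y _
    exact (((hderiv_u hu ht y).sub (hderiv_u hu ht x)).const_mul _).mul
      ((hderiv_u hu ht y).sub (hderiv_u hu ht x))
  have e : (1/2 : ℝ) * ∑ y, (q x y * (udotF q u t y - udotF q u t x) * (u t y - u t x)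
        + q x y * (u t y - u t x) * (udotF q u t y - udotF q u t x))
      = 2 * gGammaBil q (u t) (udotF q u t) x := by
    unfold gGammaBil
    rw [Finset.sum_congr rfl (fun y _ => by
      show _ = 2 * (q x y * (u t y - u t x) * (udotF q u t y - udotF q u t x)); ring),
      ← Finset.mul_sum]
    ring
  rw [← e]
  exact H

lemma cont_u (x : V) : ContinuousOn (fun s => u s x) (Set.Ici 0) :=
  fun t ht => (hderiv_u hu ht x).continuousWithinAt

lemma cont_glap (x : V) : ContinuousOn (fun s => glap q (u s) x) (Set.Ici 0) :=
  fun t ht => (hderiv_glap hu ht x).continuousWithinAt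

lemma cont_gGamma (x : V) : ContinuousOn (fun s => gGamma q (u s) x) (Set.Ici 0) :=
  fun t ht => (hderiv_gGamma hu ht x).continuousWithinAt

lemma hderivAt_u {t : ℝ} (ht : 0 < t) (x : V) :
    HasDerivAt (fun s => u s x) (udotF q u t x) t :=
  (hderiv_u hu (le_of_lt ht) x).hasDerivAt (Ici_mem_nhds ht)

lemma hderivAt_gGamma {t : ℝ} (ht : 0 < t) (x : V) :
    HasDerivAt (fun s => gGamma q (u s) x) (2 * gGammaBil q (u t) (udotF q u t) x) t :=
  (hderiv_gGamma hu (le_of_lt ht) x).hasDerivAt (Ici_mem_nhds ht)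

lemma hderivAt_neg_glap {t : ℝ} (ht : 0 < t) (x : V) :
    HasDerivAt (fun s => -glap q (u s) x) (-glap q (udotF q u t) x) t :=
  ((hderiv_glap hu (le_of_lt ht) x).hasDerivAt (Ici_mem_nhds ht)).neg

end Deriv

section Crossing

lemma deriv_nonneg_of_contact {F : ℝ → ℝ} {F' a t : ℝ} (h : HasDerivAt F F' t) (hat : a < t)
    (hle : ∀ s ∈ Set.Ico a t, F s ≤ 0) (h0 : F t = 0) : 0 ≤ F' := by
  have hd : HasDerivWithinAt F F' (Set.Iio t) t := h.hasDerivWithinAt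
  rw [hasDerivWithinAt_iff_tendsto_slope] at hd
  have hss : Set.Iio t \ {t} = Set.Iio t := Set.diff_singleton_eq_self (by simp)
  rw [hss] at hd
  refine ge_of_tendsto hd ?_
  filter_upwards [Filter.inter_mem (mem_nhdsWithin_of_mem_nhds (Ioi_mem_nhds hat))
    self_mem_nhdsWithin] with s hs
  have hs1 : a < s := hs.1
  have hs2 : s < t := hs.2
  have hF : F s ≤ 0 := hle s ⟨le_of_lt hs1, hs2⟩
  rw [show slope F t s = (F s - F t) / (s - t) from slope_def_field F t s, h0, sub_zero]
  exact div_nonneg_iff.mpr (Or.inr ⟨hF, by linarith⟩)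

lemma no_crossing {V : Type*} [Fintype V] {a T : ℝ}
    (φ : ℝ → ℝ) (ψ : V → ℝ → ℝ)
    (hφ : ContinuousOn φ (Set.Icc a T)) (hψ : ∀ x, ContinuousOn (ψ x) (Set.Icc a T))
    (init : ∀ x, ψ x a < φ a)
    (step : ∀ t ∈ Set.Ioc a T, ∀ x, (∀ z, ψ z t ≤ φ t) → ψ x t = φ t →
      (∀ s ∈ Set.Ico a t, ψ x s < φ s) → False) :
    ∀ t ∈ Set.Icc a T, ∀ x, ψ x t < φ t := by
  by_contra hcon
  push_neg at hcon
  obtain ⟨t1, ht1, x1, hx1⟩ := hcon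
  set S : Set ℝ := ⋃ x : V, {t ∈ Set.Icc a T | φ t ≤ ψ x t} with hS
  have hSclosed : IsClosed S := by
    apply isClosed_iUnion_of_finite
    intro x
    exact isClosed_Icc.isClosed_le hφ (hψ x)
  have hSne : S.Nonempty := ⟨t1, Set.mem_iUnion.mpr ⟨x1, ht1, hx1⟩⟩
  have hSbdd : BddBelow S := ⟨a, fun s hs => (Set.mem_iUnion.mp hs).choose_spec.1.1⟩
  set t' := sInf S with ht'
  have ht'S : t' ∈ S := hSclosed.csInf_mem hSne hSbdd
  obtain ⟨x', hx'mem⟩ := Set.mem_iUnion.mp ht'S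
  have ht'Icc : t' ∈ Set.Icc a T := hx'mem.1
  have hat' : a < t' := by
    rcases lt_or_eq_of_le ht'Icc.1 with h | h
    · exact h
    · exact absurd hx'mem.2 (by rw [← h]; exact not_le.mpr (init x'))
  have hbefore : ∀ s ∈ Set.Ico a t', ∀ z, ψ z s < φ s := by
    intro s hs z
    by_contra hzs
    push_neg at hzs
    exact notMem_of_lt_csInf hs.2 hSbdd
      (Set.mem_iUnion.mpr ⟨z, ⟨hs.1, le_trans hs.2.le ht'Icc.2⟩, hzs⟩)
  have hzle : ∀ z, ψ z t' ≤ φ t' := by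
    intro z
    have hcl : t' ∈ closure (Set.Ico a t') := by
      rw [closure_Ico (ne_of_lt hat')]; exact ⟨le_of_lt hat', le_refl _⟩
    refine ContinuousWithinAt.closure_le hcl ?_ ?_ (fun s hs => (hbefore s hs z).le)
    · exact ((hψ z).continuousWithinAt ht'Icc).mono
        (fun s hs => ⟨hs.1, le_trans hs.2.le ht'Icc.2⟩)
    · exact (hφ.continuousWithinAt ht'Icc).mono
        (fun s hs => ⟨hs.1, le_trans hs.2.le ht'Icc.2⟩)
  exact step t' ⟨hat', ht'Icc.2⟩ x' hzle (le_antisymm (hzle x') hx'mem.2)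
    (fun s hs => hbefore s hs x')

end Crossing

section Invariance
variable {V : Type*} [Fintype V] {q : V → V → ℝ} {u : ℝ → V → ℝ} {qmin n : ℝ}

theorem gamma_invariant
    (hq : ∀ x y, 0 ≤ q x y) (hn : 0 < n)
    (hqmin_pos : 0 < qmin) (hqmin : ∀ x y, 0 < q x y → qmin ≤ q x y)
    (hCD : ∀ f : V → ℝ, ∀ x, (1 / n) * (glap q f x) ^ 2 ≤ gGammaTwo q f x)
    (hu : ∀ t ∈ Set.Ici (0 : ℝ), ∀ x, HasDerivWithinAt (fun s => u s x)
      (glap q (u t) x + gGamma q (u t) x) (Set.Ici 0) t)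
    (h0 : ∀ x, gGamma q (u 0) x ≤ qmin / 2) :
    ∀ t ∈ Set.Ici (0:ℝ), ∀ x, gGamma q (u t) x ≤ qmin / 2 := by
  obtain ⟨c, hc_def⟩ : ∃ c : ℝ, c = qmin / 2 := ⟨_, rfl⟩
  rw [← hc_def] at h0 ⊢
  have hc : 0 < c := by rw [hc_def]; positivity
  obtain ⟨Q, hQ_def⟩ : ∃ Q : ℝ, Q = ∑ x : V, ∑ y : V, q x y := ⟨_, rfl⟩
  have hQ0 : 0 ≤ Q := hQ_def ▸ Finset.sum_nonneg fun x _ => Finset.sum_nonneg fun y _ => hq x y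
  have hQrow : ∀ x : V, (∑ y, q x y) ≤ Q := by
    intro x
    rw [hQ_def]
    exact Finset.single_le_sum (f := fun x => ∑ y, q x y)
      (fun z _ => Finset.sum_nonneg fun y _ => hq z y) (Finset.mem_univ x)
  obtain ⟨L, hL_def⟩ : ∃ L : ℝ, L = Q * (c + 1) / c + 1 := ⟨_, rfl⟩
  have hL1 : 1 ≤ L := by
    have h1 : 0 ≤ Q * (c + 1) / c := by positivity
    linarith [hL_def.ge, hL_def.le]
  have hL0 : 0 < L := lt_of_lt_of_le one_pos hL1
  intro t₀ ht₀ x₀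
  rcases eq_or_lt_of_le (Set.mem_Ici.mp ht₀) with h | ht₀pos
  · rw [← h]; exact h0 x₀
  have main : ∀ ε : ℝ, 0 < ε → ε ≤ Real.exp (-(2 * L * t₀)) →
      gGamma q (u t₀) x₀ < c + ε * Real.exp (2 * L * t₀) := by
    intro ε hε hεle
    have key := no_crossing (a := 0) (T := t₀)
      (fun t => c + ε * Real.exp (2 * L * t)) (fun x t => gGamma q (u t) x)
      (by fun_prop)
      (fun x => (cont_gGamma hu x).mono (fun s hs => hs.1))
      (by
        intro x
        simp only [mul_zero, Real.exp_zero, mul_one]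
        exact lt_of_le_of_lt (h0 x) (by linarith))
      ?step
    · exact key t₀ ⟨le_of_lt ht₀pos, le_refl _⟩ x₀
    intro t' ht' x' hmax0 heq0 hbef0
    have hmax : ∀ z, gGamma q (u t') z ≤ c + ε * Real.exp (2 * L * t') := hmax0
    have heq : gGamma q (u t') x' = c + ε * Real.exp (2 * L * t') := heq0
    have hbef : ∀ s ∈ Set.Ico (0:ℝ) t', gGamma q (u s) x' < c + ε * Real.exp (2 * L * s) := hbef0
    clear hmax0 heq0 hbef0
    have ht'pos : 0 < t' := ht'.1
    obtain ⟨E, hE_def⟩ : ∃ E : ℝ, E = ε * Real.exp (2 * L * t') := ⟨_, rfl⟩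
    obtain ⟨M, hM_def⟩ : ∃ M : ℝ, M = c + E := ⟨_, rfl⟩
    have hE : 0 < E := by rw [hE_def]; positivity
    have hMc : c < M := by rw [hM_def]; linarith
    have hM0 : 0 < M := lt_trans hc hMc
    have hMc1 : M ≤ c + 1 := by
      have h1 : ε * Real.exp (2 * L * t') ≤ Real.exp (-(2 * L * t₀)) * Real.exp (2 * L * t') :=
        mul_le_mul_of_nonneg_right hεle (Real.exp_nonneg _)
      rw [← Real.exp_add] at h1
      have h2 : Real.exp (-(2 * L * t₀) + 2 * L * t') ≤ 1 := by
        rw [show (1:ℝ) = Real.exp 0 from (Real.exp_zero).symm]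
        apply Real.exp_le_exp.mpr
        nlinarith [ht'.2]
      rw [hM_def, hE_def]
      linarith
    have hφd : HasDerivAt (fun t => c + ε * Real.exp (2 * L * t))
        (ε * (Real.exp (2 * L * t') * (2 * L))) t' := by
      have h1 : HasDerivAt (fun t : ℝ => 2 * L * t) (2 * L) t' := by
        simpa using (hasDerivAt_id t').const_mul (2 * L)
      exact ((h1.exp).const_mul ε).const_add c
    have hψd := hderivAt_gGamma hu ht'pos x'
    have hFd := hψd.sub hφd
    have hcontact : 0 ≤ 2 * gGammaBil q (u t') (udotF q u t') x'
        - ε * (Real.exp (2 * L * t') * (2 * L)) := by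
      apply deriv_nonneg_of_contact hFd ht'pos
      · intro s hs
        have := hbef s hs
        show gGamma q (u s) x' - (c + ε * Real.exp (2 * L * s)) ≤ 0
        linarith
      · show gGamma q (u t') x' - (c + ε * Real.exp (2 * L * t')) = 0
        rw [heq]
        ring
    -- notation
    have hgx' : gGamma q (u t') x' = M := by rw [heq, hM_def, hE_def]
    have hgmax : ∀ y, gGamma q (u t') y ≤ M := by
      intro y; rw [← hgx']; rw [hgx']; exact le_trans (hmax y) (by rw [hM_def, hE_def])
    have hgnn : ∀ y, 0 ≤ gGamma q (u t') y := fun y => gGamma_nonneg hq _ y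
    obtain ⟨A, hA_def⟩ : ∃ A : ℝ,
        A = ∑ y, q x' y * (gGamma q (u t') x' - gGamma q (u t') y) := ⟨_, rfl⟩
    have hA0 : 0 ≤ A := by
      rw [hA_def]
      exact Finset.sum_nonneg fun y _ => mul_nonneg (hq x' y) (by linarith [hgmax y, hgx'])
    have hAQ : A ≤ Q * M := by
      have h1 : A ≤ ∑ y, q x' y * M := by
        rw [hA_def]
        exact Finset.sum_le_sum fun y _ => by
          have h2 := hgnn y; have h3 := hq x' y
          have h4 : gGamma q (u t') x' - gGamma q (u t') y ≤ M := by linarith [hgx']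
          nlinarith
      rw [← Finset.sum_mul] at h1
      nlinarith [hQrow x']
    obtain ⟨β, hβ_def⟩ : ∃ β : ℝ, β = Real.sqrt (M / c) := ⟨_, rfl⟩
    have hdivpos : (0:ℝ) < M / c := div_pos hM0 hc
    have hdiv1 : (1:ℝ) ≤ M / c := (one_le_div hc).mpr hMc.le
    have hβ1 : 1 ≤ β := by
      rw [hβ_def, show (1:ℝ) = Real.sqrt 1 from (Real.sqrt_one).symm]
      exact Real.sqrt_le_sqrt hdiv1
    have hβle : β - 1 ≤ (M - c) / c := by
      have h1 : β ≤ M / c := by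
        rw [hβ_def]
        calc Real.sqrt (M / c) ≤ Real.sqrt ((M / c) ^ 2) :=
              Real.sqrt_le_sqrt (by nlinarith)
          _ = M / c := Real.sqrt_sq hdivpos.le
      have h2 : M / c - 1 = (M - c) / c := by field_simp
      linarith
    have hgrad : ∀ y, 0 < q x' y → |u t' y - u t' x'| ≤ β := by
      intro y hqy
      rw [hβ_def]
      apply Real.abs_le_sqrt
      have h1 := edge_sq_le hq (u t') x' y
      rw [hgx'] at h1
      have h3 := hqmin x' y hqy
      rw [le_div_iff₀ hc]
      have h4 : c ≤ q x' y := by rw [hc_def]; linarith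
      nlinarith
    have hgmaxx : ∀ y, gGamma q (u t') y ≤ gGamma q (u t') x' := by
      intro y; rw [hgx']; exact hgmax y
    have hbilA : 2 * gGammaBil q (u t') (gGamma q (u t')) x' ≤ β * A := by
      rw [hA_def]
      exact bil_max_bound hq (u t') (gGamma q (u t')) x' β hgrad hgmaxx
    have hCD' : 2 * gGammaBil q (u t') (glap q (u t')) x' ≤ glap q (gGamma q (u t')) x' := by
      have h1 := hCD (u t') x'
      have h2 := bil_glap (q := q) (u t') x'
      have h3 : (0:ℝ) ≤ 1 / n * (glap q (u t') x') ^ 2 := by positivity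
      linarith
    have hglapA : glap q (gGamma q (u t')) x' = -A := by
      rw [hA_def]
      unfold glap
      rw [← Finset.sum_neg_distrib]
      exact Finset.sum_congr rfl fun y _ => by ring
    have hsplit : 2 * gGammaBil q (u t') (udotF q u t') x' ≤ (β - 1) * A := by
      have h1 : gGammaBil q (u t') (udotF q u t') x'
          = gGammaBil q (u t') (glap q (u t')) x' + gGammaBil q (u t') (gGamma q (u t')) x' :=
        bil_add (q := q) (u t') (glap q (u t')) (gGamma q (u t')) x'
      rw [h1]
      rw [hglapA] at hCD'
      have he : (β - 1) * A = β * A - A := by ring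
      linarith
    have hkey : ε * (Real.exp (2 * L * t') * (2 * L)) ≤ (β - 1) * A :=
      le_trans (by linarith) hsplit
    have hβc0 : 0 ≤ (M - c) / c := div_nonneg (by linarith) hc.le
    have hfin : (β - 1) * A ≤ (M - c) / c * (Q * M) :=
      mul_le_mul hβle hAQ hA0 hβc0
    have hQM : Q * M ≤ Q * (c + 1) := by nlinarith
    have hlast : (M - c) / c * (Q * M) ≤ E * (L - 1) := by
      have h1 : (M - c) / c * (Q * M) = E * (Q * M) / c := by rw [hM_def]; ring
      have h2 : E * (Q * M) / c ≤ E * (Q * (c + 1)) / c := by gcongr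
      have h3 : E * (Q * (c + 1)) / c = E * (L - 1) := by rw [hL_def]; ring
      linarith
    have hfinal : 2 * L * E ≤ E * (L - 1) := by
      have h1 : 2 * L * E = ε * (Real.exp (2 * L * t') * (2 * L)) := by rw [hE_def]; ring
      linarith
    nlinarith [hE, hL1]
  by_contra hcon
  push_neg at hcon
  obtain ⟨δ, hδ_def⟩ : ∃ δ : ℝ, δ = gGamma q (u t₀) x₀ - c := ⟨_, rfl⟩
  have hδ : 0 < δ := by rw [hδ_def]; linarith
  obtain ⟨ε, hε_def⟩ : ∃ ε : ℝ,
      ε = min (Real.exp (-(2 * L * t₀))) (δ * Real.exp (-(2 * L * t₀)) / 2) := ⟨_, rfl⟩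
  have hε : 0 < ε := by rw [hε_def]; exact lt_min (Real.exp_pos _) (by positivity)
  have h1 := main ε hε (hε_def.le.trans (min_le_left _ _))
  have h2 : ε * Real.exp (2 * L * t₀) ≤ δ / 2 := by
    have h3 : ε ≤ δ * Real.exp (-(2 * L * t₀)) / 2 := hε_def.le.trans (min_le_right _ _)
    have h4 : ε * Real.exp (2 * L * t₀)
        ≤ (δ * Real.exp (-(2 * L * t₀)) / 2) * Real.exp (2 * L * t₀) :=
      mul_le_mul_of_nonneg_right h3 (Real.exp_nonneg _)
    have h5 : δ * Real.exp (-(2 * L * t₀)) / 2 * Real.exp (2 * L * t₀)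
        = δ / 2 * (Real.exp (-(2 * L * t₀)) * Real.exp (2 * L * t₀)) := by ring
    rw [h5, ← Real.exp_add] at h4
    simpa using h4
  rw [hδ_def] at h2
  linarith

end Invariance

section LiYau
variable {V : Type*} [Fintype V] {q : V → V → ℝ} {u : ℝ → V → ℝ} {qmin n : ℝ}

lemma glap_neg (f : V → ℝ) (x : V) :
    glap q (fun z => -f z) x = -glap q f x := by
  unfold glap
  rw [← Finset.sum_neg_distrib]
  exact Finset.sum_congr rfl fun y _ => by ring

lemma bil_neg (w f : V → ℝ) (x : V) :
    gGammaBil q w (fun z => -f z) x = -gGammaBil q w f x := by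
  unfold gGammaBil
  rw [Finset.sum_congr rfl (fun y (_ : y ∈ Finset.univ) => by
    show q x y * (w y - w x) * ((-f y) - (-f x)) = -(q x y * (w y - w x) * (f y - f x))
    ring), Finset.sum_neg_distrib]
  ring

theorem li_yau
    (hq : ∀ x y, 0 ≤ q x y) (hn : 0 < n)
    (hqmin_pos : 0 < qmin) (hqmin : ∀ x y, 0 < q x y → qmin ≤ q x y)
    (hCD : ∀ f : V → ℝ, ∀ x, (1 / n) * (glap q f x) ^ 2 ≤ gGammaTwo q f x)
    (hu : ∀ t ∈ Set.Ici (0 : ℝ), ∀ x, HasDerivWithinAt (fun s => u s x)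
      (glap q (u t) x + gGamma q (u t) x) (Set.Ici 0) t)
    (h0 : ∀ x, gGamma q (u 0) x ≤ qmin / 2) :
    ∀ T : ℝ, 0 < T → ∀ x, -glap q (u T) x ≤ n / (2 * T) := by
  have hΓ := gamma_invariant hq hn hqmin_pos hqmin hCD hu h0
  intro T hT xb
  have hTne : (2:ℝ) * T ≠ 0 := by positivity
  rw [show n / (2 * T) = n / 2 * T⁻¹ by field_simp]
  apply le_of_forall_pos_le_add
  intro δ hδ
  -- bound on -glap over [0, T]
  have hBx : ∀ x : V, ∃ Cx : ℝ, ∀ t ∈ Set.Icc (0:ℝ) T, ‖-glap q (u t) x‖ ≤ Cx := by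
    intro x
    exact isCompact_Icc.exists_bound_of_continuousOn
      (((cont_glap hu x).mono (fun s hs => hs.1)).neg)
  choose C hC using hBx
  obtain ⟨B, hB⟩ : ∃ B : ℝ, (0 ≤ B ∧ ∀ t ∈ Set.Icc (0:ℝ) T, ∀ x, -glap q (u t) x ≤ B) := by
    refine ⟨∑ x : V, ‖C x‖, Finset.sum_nonneg fun x _ => norm_nonneg _, ?_⟩
    intro t ht x
    calc -glap q (u t) x ≤ ‖-glap q (u t) x‖ := le_abs_self _
      _ ≤ C x := hC x t ht
      _ ≤ ‖C x‖ := le_abs_self _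
      _ ≤ ∑ z : V, ‖C z‖ := Finset.single_le_sum (f := fun z => ‖C z‖)
          (fun z _ => norm_nonneg _) (Finset.mem_univ x)
  obtain ⟨hB0, hBle⟩ := hB
  obtain ⟨a, ha_def⟩ : ∃ a : ℝ, a = min T (n / (2 * (B + 1))) := ⟨_, rfl⟩
  have ha0 : 0 < a := by rw [ha_def]; exact lt_min hT (by positivity)
  have haT : a ≤ T := ha_def.le.trans (min_le_left _ _)
  have hainv : B + 1 ≤ n / 2 * a⁻¹ := by
    have h1 : a ≤ n / (2 * (B + 1)) := ha_def.le.trans (min_le_right _ _)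
    rw [le_div_iff₀ (by positivity : (0:ℝ) < 2 * (B + 1))] at h1
    have h2 : n / 2 * a⁻¹ = n / (2 * a) := by field_simp
    rw [h2, le_div_iff₀ (by positivity : (0:ℝ) < 2 * a)]
    nlinarith
  have key := no_crossing (a := a) (T := T)
    (fun t => n / 2 * t⁻¹ + δ) (fun x t => -glap q (u t) x)
    (by
      apply ContinuousOn.add _ continuousOn_const
      apply ContinuousOn.mul continuousOn_const
      exact ContinuousOn.inv₀ continuousOn_id (fun t ht => by
        show t ≠ 0
        have h1 : a ≤ t := ht.1
        exact ne_of_gt (lt_of_lt_of_le ha0 h1)))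
    (fun x => ((cont_glap hu x).mono (fun s hs => le_trans ha0.le hs.1)).neg)
    (by
      intro x
      have h1 := hBle a ⟨ha0.le, haT⟩ x
      have : (0:ℝ) < δ := hδ
      linarith)
    ?step
  · have := key T ⟨haT, le_refl T⟩ xb
    linarith
  intro t' ht' x' hmax0 heq0 hbef0
  have hmax : ∀ z, -glap q (u t') z ≤ n / 2 * t'⁻¹ + δ := hmax0
  have heq : -glap q (u t') x' = n / 2 * t'⁻¹ + δ := heq0
  have hbef : ∀ s ∈ Set.Ico a t', -glap q (u s) x' < n / 2 * s⁻¹ + δ := hbef0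
  clear hmax0 heq0 hbef0
  have ht'pos : 0 < t' := lt_trans ha0 ht'.1
  have ht'ne : t' ≠ 0 := ne_of_gt ht'pos
  obtain ⟨M, hM_def⟩ : ∃ M : ℝ, M = n / 2 * t'⁻¹ + δ := ⟨_, rfl⟩
  have hrpos : 0 < t'⁻¹ := by positivity
  have hM0 : 0 < M := by rw [hM_def]; positivity
  -- derivatives
  have hψd := hderivAt_neg_glap hu ht'pos x'
  have hφd : HasDerivAt (fun t : ℝ => n / 2 * t⁻¹ + δ)
      (n / 2 * (-(t' ^ 2)⁻¹)) t' :=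
    ((hasDerivAt_inv ht'ne).const_mul (n / 2)).add_const δ
  have hFd := hψd.sub hφd
  have hcontact : 0 ≤ -glap q (udotF q u t') x' - n / 2 * (-(t' ^ 2)⁻¹) := by
    apply deriv_nonneg_of_contact hFd ht'.1
    · intro s hs
      have := hbef s hs
      show -glap q (u s) x' - (n / 2 * s⁻¹ + δ) ≤ 0
      linarith
    · show -glap q (u t') x' - (n / 2 * t'⁻¹ + δ) = 0
      rw [heq]; ring
  -- max point estimate
  have hfx : -glap q (u t') x' = M := by rw [heq, hM_def]
  have hfmax : ∀ y, (fun z => -glap q (u t') z) y ≤ (fun z => -glap q (u t') z) x' := by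
    intro y
    simp only
    rw [hfx]
    exact le_trans (hmax y) hM_def.ge
  have hgrad : ∀ y, 0 < q x' y → |u t' y - u t' x'| ≤ 1 := by
    intro y hqy
    have h1 := edge_sq_le hq (u t') x' y
    have h2 := hΓ t' ht'pos.le x'
    have h3 := hqmin x' y hqy
    rw [show (1:ℝ) = Real.sqrt 1 from Real.sqrt_one.symm]
    apply Real.abs_le_sqrt
    nlinarith
  have hbil := bil_max_bound hq (u t') (fun z => -glap q (u t') z) x' 1 hgrad hfmax
  have hA : (∑ y, q x' y * ((fun z => -glap q (u t') z) x' - (fun z => -glap q (u t') z) y))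
      = glap q (glap q (u t')) x' := by
    simp only
    unfold glap
    exact Finset.sum_congr rfl fun y _ => by ring
  rw [hA, one_mul] at hbil
  have hbilneg : gGammaBil q (u t') (fun z => -glap q (u t') z) x'
      = -gGammaBil q (u t') (glap q (u t')) x' := bil_neg (u t') (glap q (u t')) x'
  rw [hbilneg] at hbil
  -- hbil : 2 * -(Bil(u, glap u) x') ≤ glap (glap u) x'
  have hCDx := hCD (u t') x'
  have hG2 := bil_glap (q := q) (u t') x'
  have hsplitlap : glap q (udotF q u t') x'
      = glap q (glap q (u t')) x' + glap q (gGamma q (u t')) x' :=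
    glap_add (q := q) (glap q (u t')) (gGamma q (u t')) x'
  have hglapu : glap q (u t') x' = -M := by
    have := hfx; linarith
  have hM2 : (glap q (u t') x') ^ 2 = M ^ 2 := by rw [hglapu]; ring
  -- CD: (1/n) M^2 ≤ (glap(Γu) x' - 2 Bil(u, glap u) x')/2
  have hCDx' : (1 / n) * M ^ 2
      ≤ (glap q (gGamma q (u t')) x' - 2 * gGammaBil q (u t') (glap q (u t')) x') / 2 := by
    rw [← hM2]
    calc (1 / n) * (glap q (u t') x') ^ 2 ≤ gGammaTwo q (u t') x' := hCDx
      _ = _ := by unfold gGammaTwo; ring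
  have hDbound : -glap q (udotF q u t') x' ≤ -(2 * M ^ 2) / n := by
    rw [hsplitlap]
    have h1 : glap q (gGamma q (u t')) x'
        ≥ (2 / n) * M ^ 2 + 2 * gGammaBil q (u t') (glap q (u t')) x' := by
      have := hCDx'
      have e : (2:ℝ) / n * M ^ 2 = 2 * ((1 / n) * M ^ 2) := by ring
      linarith [hCDx']
    have h2 : -(2 * gGammaBil q (u t') (glap q (u t')) x') ≤ glap q (glap q (u t')) x' := by
      linarith [hbil]
    have e2 : -(2 * M ^ 2) / n = -((2 / n) * M ^ 2) := by ring
    linarith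
  have hD : (0:ℝ) ≤ -(2 * M ^ 2) / n + n / 2 * (t'⁻¹) ^ 2 := by
    have e : n / 2 * (-(t' ^ 2)⁻¹) = -(n / 2 * (t'⁻¹) ^ 2) := by
      rw [inv_pow]; ring
    rw [e] at hcontact
    linarith
  have hD2 : 2 * M ^ 2 ≤ (n / 2 * (t'⁻¹) ^ 2) * n := by
    have h1 : (2 * M ^ 2) / n ≤ n / 2 * (t'⁻¹) ^ 2 := by
      have e : -(2 * M ^ 2) / n = -((2 * M ^ 2) / n) := by ring
      rw [e] at hD
      linarith
    exact (div_le_iff₀ hn).mp h1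
  nlinarith [mul_pos (mul_pos hn hrpos) hδ, sq_nonneg δ, hδ, hM_def]

end LiYau

section Riccati
open MeasureTheory intervalIntegral

lemma riccati_right {g : ℝ → ℝ} {a b Q : ℝ} (ha : 0 < a) (hab : a < b) (hQ : 0 < Q)
    (hgc : ContinuousOn g (Set.Ioi 0)) (hg0 : ∀ s ∈ Set.Icc a b, 0 ≤ g s) :
    ∃ s ∈ Set.Icc a b, Real.sqrt (2 * g s / Q)
      ≤ (∫ σ in a..s, g σ) + 2 / (Q * (b - a)) := by
  by_contra hcon
  push_neg at hcon
  obtain ⟨K, hK_def⟩ : ∃ K : ℝ, K = 2 / (Q * (b - a)) := ⟨_, rfl⟩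
  have hK : 0 < K := by
    rw [hK_def]; exact div_pos two_pos (mul_pos hQ (by linarith))
  rw [← hK_def] at hcon
  have hsub : Set.Icc a b ⊆ Set.Ioi 0 := fun s hs => lt_of_lt_of_le ha hs.1
  have hcont : ∀ s ∈ Set.Icc a b, ContinuousAt g s :=
    fun s hs => hgc.continuousAt (Ioi_mem_nhds (hsub hs))
  have hint : ∀ s ∈ Set.Icc a b, IntervalIntegrable g volume a s := by
    intro s hs
    apply ContinuousOn.intervalIntegrable
    intro σ hσ
    rw [Set.uIcc_of_le hs.1] at hσ
    exact (hcont σ ⟨hσ.1, le_trans hσ.2 hs.2⟩).continuousWithinAt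
  have hGnn : ∀ s ∈ Set.Icc a b, 0 ≤ (∫ σ in a..s, g σ) := by
    intro s hs
    apply intervalIntegral.integral_nonneg hs.1
    intro σ hσ
    exact hg0 σ ⟨hσ.1, le_trans hσ.2 hs.2⟩
  have hpos : ∀ s ∈ Set.Icc a b, 0 < (∫ σ in a..s, g σ) + K :=
    fun s hs => by linarith [hGnn s hs]
  have hgl : ∀ s ∈ Set.Icc a b, Q / 2 * ((∫ σ in a..s, g σ) + K) ^ 2 < g s := by
    intro s hs
    have h1 := hcon s hs
    have h2 : ((∫ σ in a..s, g σ) + K) ^ 2 < 2 * g s / Q :=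
      (Real.lt_sqrt (hpos s hs).le).mp h1
    have h3 := (lt_div_iff₀ hQ).mp h2
    nlinarith
  have hGd : ∀ s ∈ Set.Icc a b, HasDerivAt (fun r => ∫ σ in a..r, g σ) (g s) s := by
    intro s hs
    apply intervalIntegral.integral_hasDerivAt_right (hint s hs)
    · exact ⟨Set.Ioi 0, Ioi_mem_nhds (hsub hs),
        (hgc.aestronglyMeasurable measurableSet_Ioi)⟩
    · exact hcont s hs
  have hΦd : ∀ s ∈ Set.Icc a b, HasDerivAt
      (fun r => ((∫ σ in a..r, g σ) + K)⁻¹ + Q / 2 * r)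
      (-(g s) / ((∫ σ in a..s, g σ) + K) ^ 2 + Q / 2) s := by
    intro s hs
    have h1 := ((hGd s hs).add_const K).fun_inv (ne_of_gt (hpos s hs))
    simpa using h1.fun_add ((hasDerivAt_id s).const_mul (Q / 2))
  have hanti : StrictAntiOn (fun r => ((∫ σ in a..r, g σ) + K)⁻¹ + Q / 2 * r)
      (Set.Icc a b) := by
    apply strictAntiOn_of_deriv_neg (convex_Icc a b)
    · exact fun s hs => (hΦd s hs).continuousAt.continuousWithinAt
    · intro s hs
      rw [interior_Icc] at hs
      have hs' : s ∈ Set.Icc a b := ⟨hs.1.le, hs.2.le⟩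
      rw [(hΦd s hs').deriv]
      have h1 := hgl s hs'
      have h2 := hpos s hs'
      have hX2 : 0 < ((∫ σ in a..s, g σ) + K) ^ 2 := pow_pos h2 2
      have h4 : Q / 2 < g s / ((∫ σ in a..s, g σ) + K) ^ 2 :=
        (lt_div_iff₀ hX2).mpr (by nlinarith)
      rw [neg_div]
      linarith
  have hab' := hanti (Set.left_mem_Icc.mpr hab.le) (Set.right_mem_Icc.mpr hab.le) hab
  simp only [intervalIntegral.integral_same] at hab'
  have hKinv : K⁻¹ = Q * (b - a) / 2 := by rw [hK_def, inv_div]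
  have hHb := hpos b (Set.right_mem_Icc.mpr hab.le)
  have hHbpos : 0 < ((∫ σ in a..b, g σ) + K)⁻¹ := inv_pos.mpr hHb
  rw [zero_add, hKinv] at hab'
  linarith

end Riccati

section RiccatiLeft
open MeasureTheory intervalIntegral

lemma riccati_left {g : ℝ → ℝ} {a b Q : ℝ} (ha : 0 < a) (hab : a < b) (hQ : 0 < Q)
    (hgc : ContinuousOn g (Set.Ioi 0)) (hg0 : ∀ s ∈ Set.Icc a b, 0 ≤ g s) :
    ∃ s ∈ Set.Icc a b, Real.sqrt (2 * g s / Q)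
      ≤ (∫ σ in s..b, g σ) + 2 / (Q * (b - a)) := by
  by_contra hcon
  push_neg at hcon
  obtain ⟨K, hK_def⟩ : ∃ K : ℝ, K = 2 / (Q * (b - a)) := ⟨_, rfl⟩
  have hK : 0 < K := by
    rw [hK_def]; exact div_pos two_pos (mul_pos hQ (by linarith))
  rw [← hK_def] at hcon
  have hsub : Set.Icc a b ⊆ Set.Ioi 0 := fun s hs => lt_of_lt_of_le ha hs.1
  have hcont : ∀ s ∈ Set.Icc a b, ContinuousAt g s :=
    fun s hs => hgc.continuousAt (Ioi_mem_nhds (hsub hs))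
  have hint : ∀ s ∈ Set.Icc a b, IntervalIntegrable g volume s b := by
    intro s hs
    apply ContinuousOn.intervalIntegrable
    intro σ hσ
    rw [Set.uIcc_of_le hs.2] at hσ
    exact (hcont σ ⟨le_trans hs.1 hσ.1, hσ.2⟩).continuousWithinAt
  have hGnn : ∀ s ∈ Set.Icc a b, 0 ≤ (∫ σ in s..b, g σ) := by
    intro s hs
    apply intervalIntegral.integral_nonneg hs.2
    intro σ hσ
    exact hg0 σ ⟨le_trans hs.1 hσ.1, hσ.2⟩
  have hpos : ∀ s ∈ Set.Icc a b, 0 < (∫ σ in s..b, g σ) + K :=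
    fun s hs => by linarith [hGnn s hs]
  have hgl : ∀ s ∈ Set.Icc a b, Q / 2 * ((∫ σ in s..b, g σ) + K) ^ 2 < g s := by
    intro s hs
    have h1 := hcon s hs
    have h2 : ((∫ σ in s..b, g σ) + K) ^ 2 < 2 * g s / Q :=
      (Real.lt_sqrt (hpos s hs).le).mp h1
    have h3 := (lt_div_iff₀ hQ).mp h2
    nlinarith
  have hGd : ∀ s ∈ Set.Icc a b, HasDerivAt (fun r => ∫ σ in r..b, g σ) (-(g s)) s := by
    intro s hs
    apply intervalIntegral.integral_hasDerivAt_left (hint s hs)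
    · exact ⟨Set.Ioi 0, Ioi_mem_nhds (hsub hs),
        (hgc.aestronglyMeasurable measurableSet_Ioi)⟩
    · exact hcont s hs
  have hΦd : ∀ s ∈ Set.Icc a b, HasDerivAt
      (fun r => ((∫ σ in r..b, g σ) + K)⁻¹ - Q / 2 * r)
      (-(-(g s)) / ((∫ σ in s..b, g σ) + K) ^ 2 - Q / 2) s := by
    intro s hs
    have h1 := ((hGd s hs).add_const K).fun_inv (ne_of_gt (hpos s hs))
    simpa using h1.fun_sub ((hasDerivAt_id s).const_mul (Q / 2))
  have hmono : StrictMonoOn (fun r => ((∫ σ in r..b, g σ) + K)⁻¹ - Q / 2 * r)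
      (Set.Icc a b) := by
    apply strictMonoOn_of_deriv_pos (convex_Icc a b)
    · exact fun s hs => (hΦd s hs).continuousAt.continuousWithinAt
    · intro s hs
      rw [interior_Icc] at hs
      have hs' : s ∈ Set.Icc a b := ⟨hs.1.le, hs.2.le⟩
      rw [(hΦd s hs').deriv]
      have h1 := hgl s hs'
      have h2 := hpos s hs'
      have hX2 : 0 < ((∫ σ in s..b, g σ) + K) ^ 2 := pow_pos h2 2
      have h4 : Q / 2 < g s / ((∫ σ in s..b, g σ) + K) ^ 2 :=
        (lt_div_iff₀ hX2).mpr (by nlinarith)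
      rw [neg_neg]
      linarith
  have hab' := hmono (Set.left_mem_Icc.mpr hab.le) (Set.right_mem_Icc.mpr hab.le) hab
  simp only [intervalIntegral.integral_same] at hab'
  have hKinv : K⁻¹ = Q * (b - a) / 2 := by rw [hK_def, inv_div]
  have hHa := hpos a (Set.left_mem_Icc.mpr hab.le)
  have hHapos : 0 < ((∫ σ in a..b, g σ) + K)⁻¹ := inv_pos.mpr hHa
  rw [zero_add, hKinv] at hab'
  linarith

end RiccatiLeft

section Harnack
open MeasureTheory intervalIntegral
variable {V : Type*} [Fintype V] {q : V → V → ℝ} {u : ℝ → V → ℝ} {qmin n : ℝ}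

variable (hq : ∀ x y, 0 ≤ q x y) (hn : 0 < n)
    (hqmin_pos : 0 < qmin) (hqmin : ∀ x y, 0 < q x y → qmin ≤ q x y)
    (hCD : ∀ f : V → ℝ, ∀ x, (1 / n) * (glap q f x) ^ 2 ≤ gGammaTwo q f x)
    (hu : ∀ t ∈ Set.Ici (0 : ℝ), ∀ x, HasDerivWithinAt (fun s => u s x)
      (glap q (u t) x + gGamma q (u t) x) (Set.Ici 0) t)
    (h0 : ∀ x, gGamma q (u 0) x ≤ qmin / 2)

include hu in
lemma intInt_glap {a b : ℝ} (ha : 0 ≤ a) (hab : a ≤ b) (x : V) :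
    IntervalIntegrable (fun σ => glap q (u σ) x) volume a b := by
  apply ContinuousOn.intervalIntegrable
  rw [Set.uIcc_of_le hab]
  exact (cont_glap hu x).mono (fun s hs => le_trans ha hs.1)

include hu in
lemma intInt_gGamma {a b : ℝ} (ha : 0 ≤ a) (hab : a ≤ b) (x : V) :
    IntervalIntegrable (fun σ => gGamma q (u σ) x) volume a b := by
  apply ContinuousOn.intervalIntegrable
  rw [Set.uIcc_of_le hab]
  exact (cont_gGamma hu x).mono (fun s hs => le_trans ha hs.1)

lemma intInt_inv {a b : ℝ} (ha : 0 < a) (hab : a ≤ b) :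
    IntervalIntegrable (fun σ : ℝ => n / 2 * σ⁻¹) volume a b := by
  apply ContinuousOn.intervalIntegrable
  rw [Set.uIcc_of_le hab]
  apply ContinuousOn.mul continuousOn_const
  exact ContinuousOn.inv₀ continuousOn_id
    (fun s hs => ne_of_gt (lt_of_lt_of_le ha hs.1))

lemma log_integral {a b : ℝ} (ha : 0 < a) (hab : a ≤ b) :
    (∫ σ in a..b, n / 2 * σ⁻¹) = n / 2 * (Real.log b - Real.log a) := by
  have hb : 0 < b := lt_of_lt_of_le ha hab
  rw [intervalIntegral.integral_const_mul, integral_inv_of_pos ha hb,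
    Real.log_div (ne_of_gt hb) (ne_of_gt ha)]

include hq hn hqmin_pos hqmin hCD hu h0 in
lemma time_bound {a b : ℝ} (ha : 0 < a) (hab : a ≤ b) (x : V) :
    u a x - u b x ≤ n / 2 * (Real.log b - Real.log a) - ∫ σ in a..b, gGamma q (u σ) x := by
  have hli := li_yau hq hn hqmin_pos hqmin hCD hu h0
  have hftc : (∫ σ in a..b, (glap q (u σ) x + gGamma q (u σ) x)) = u b x - u a x := by
    apply intervalIntegral.integral_eq_sub_of_hasDerivAt
    · intro t ht
      rw [Set.uIcc_of_le hab] at ht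
      exact hderivAt_u hu (lt_of_lt_of_le ha ht.1) x
    · exact (intInt_glap hu ha.le hab x).add (intInt_gGamma hu ha.le hab x)
  have hadd : (∫ σ in a..b, (glap q (u σ) x + gGamma q (u σ) x))
      = (∫ σ in a..b, glap q (u σ) x) + ∫ σ in a..b, gGamma q (u σ) x :=
    intervalIntegral.integral_add (intInt_glap hu ha.le hab x) (intInt_gGamma hu ha.le hab x)
  have hmono : (∫ σ in a..b, -glap q (u σ) x) ≤ ∫ σ in a..b, n / 2 * σ⁻¹ := by
    apply intervalIntegral.integral_mono_on hab
      ((intInt_glap hu ha.le hab x).neg)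
      (intInt_inv (n := n) ha hab)
    intro σ hσ
    have hσ0 : 0 < σ := lt_of_lt_of_le ha hσ.1
    have := hli σ hσ0 x
    have he : n / (2 * σ) = n / 2 * σ⁻¹ := by field_simp
    show -glap q (u σ) x ≤ n / 2 * σ⁻¹
    rw [← he]
    exact this
  have hneg : (∫ σ in a..b, -glap q (u σ) x) = -(∫ σ in a..b, glap q (u σ) x) := by
    rw [intervalIntegral.integral_neg]
  rw [log_integral (n := n) ha hab] at hmono
  have hub : u a x - u b x
      = -(∫ σ in a..b, glap q (u σ) x) - ∫ σ in a..b, gGamma q (u σ) x := by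
    rw [hadd] at hftc; linarith
  rw [hneg] at hmono
  rw [hub]
  linarith

include hq hn hqmin_pos hqmin hCD hu h0 in
lemma edge_step {a b : ℝ} (ha : 0 < a) (hab : a < b) {x x' : V}
    (hdir : 0 < q x x' ∨ 0 < q x' x) :
    u a x - u b x' ≤ n / 2 * (Real.log b - Real.log a) + 2 / (qmin * (b - a)) := by
  have hcontG : ∀ z : V, ContinuousOn (fun σ => gGamma q (u σ) z) (Set.Ioi 0) :=
    fun z => (cont_gGamma hu z).mono (fun s hs => Set.Ioi_subset_Ici_self hs)
  rcases hdir with hd | hd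
  · obtain ⟨s, hs, hsq⟩ := riccati_right ha hab hqmin_pos (hcontG x)
      (fun s _ => gGamma_nonneg hq _ x)
    have hs0 : 0 < s := lt_of_lt_of_le ha hs.1
    have hjump : u s x - u s x' ≤ Real.sqrt (2 * gGamma q (u s) x / qmin) := by
      have h1 := edge_sq_le hq (u s) x x'
      have h2 := hqmin x x' hd
      have h3 : (u s x' - u s x) ^ 2 ≤ 2 * gGamma q (u s) x / qmin := by
        rw [le_div_iff₀ hqmin_pos]
        nlinarith [gGamma_nonneg hq (u s) x]
      have h4 := Real.abs_le_sqrt h3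
      calc u s x - u s x' ≤ |u s x' - u s x| := by
            rw [abs_sub_comm]; exact le_abs_self _
        _ ≤ _ := h4
    have hT1 := time_bound hq hn hqmin_pos hqmin hCD hu h0 ha hs.1 x
    have hT3 := time_bound hq hn hqmin_pos hqmin hCD hu h0 hs0 hs.2 x'
    have hI3 : 0 ≤ ∫ σ in s..b, gGamma q (u σ) x' :=
      intervalIntegral.integral_nonneg hs.2 (fun σ _ => gGamma_nonneg hq _ x')
    have hchain := hjump.trans hsq
    linarith
  · obtain ⟨s, hs, hsq⟩ := riccati_left ha hab hqmin_pos (hcontG x')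
      (fun s _ => gGamma_nonneg hq _ x')
    have hs0 : 0 < s := lt_of_lt_of_le ha hs.1
    have hjump : u s x - u s x' ≤ Real.sqrt (2 * gGamma q (u s) x' / qmin) := by
      have h1 := edge_sq_le hq (u s) x' x
      have h2 := hqmin x' x hd
      have h3 : (u s x - u s x') ^ 2 ≤ 2 * gGamma q (u s) x' / qmin := by
        rw [le_div_iff₀ hqmin_pos]
        nlinarith [gGamma_nonneg hq (u s) x']
      have h4 := Real.abs_le_sqrt h3
      calc u s x - u s x' ≤ |u s x - u s x'| := le_abs_self _
        _ ≤ _ := h4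
    have hT1 := time_bound hq hn hqmin_pos hqmin hCD hu h0 ha hs.1 x
    have hT3 := time_bound hq hn hqmin_pos hqmin hCD hu h0 hs0 hs.2 x'
    have hI1 : 0 ≤ ∫ σ in a..s, gGamma q (u σ) x :=
      intervalIntegral.integral_nonneg hs.1 (fun σ _ => gGamma_nonneg hq _ x)
    have hchain := hjump.trans hsq
    linarith

end Harnack


section Walk
open MeasureTheory
variable {V : Type*} [Fintype V] {q : V → V → ℝ} {u : ℝ → V → ℝ} {qmin n : ℝ}

variable (hq : ∀ x y, 0 ≤ q x y) (hn : 0 < n)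
    (hqmin_pos : 0 < qmin) (hqmin : ∀ x y, 0 < q x y → qmin ≤ q x y)
    (hCD : ∀ f : V → ℝ, ∀ x, (1 / n) * (glap q f x) ^ 2 ≤ gGammaTwo q f x)
    (hu : ∀ t ∈ Set.Ici (0 : ℝ), ∀ x, HasDerivWithinAt (fun s => u s x)
      (glap q (u t) x + gGamma q (u t) x) (Set.Ici 0) t)
    (h0 : ∀ x, gGamma q (u 0) x ≤ qmin / 2)

include hq hn hqmin_pos hqmin hCD hu h0 in
lemma walk_bound {x y : V} (p : (graphOf q).Walk x y) :
    ∀ T₁ T₂ : ℝ, 0 < T₁ → T₁ < T₂ →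
      u T₁ x - u T₂ y ≤ n / 2 * (Real.log T₂ - Real.log T₁)
        + 2 * (p.length : ℝ) ^ 2 / (qmin * (T₂ - T₁)) := by
  induction p with
  | nil =>
    rename_i v
    intro T₁ T₂ hT₁ hT₁₂
    have hT := time_bound hq hn hqmin_pos hqmin hCD hu h0 hT₁ hT₁₂.le v
    have hI : 0 ≤ ∫ σ in T₁..T₂, gGamma q (u σ) v :=
      intervalIntegral.integral_nonneg hT₁₂.le (fun σ _ => gGamma_nonneg hq _ v)
    simp only [SimpleGraph.Walk.length_nil, Nat.cast_zero]
    have hz : 2 * (0:ℝ) ^ 2 / (qmin * (T₂ - T₁)) = 0 := by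
      norm_num
    rw [hz]
    linarith
  | cons hadj p ih =>
    rename_i v w z
    intro T₁ T₂ hT₁ hT₁₂
    have hΔ : 0 < T₂ - T₁ := by linarith
    rcases Nat.eq_zero_or_pos p.length with hm0 | hmpos
    · have hwz : w = z := SimpleGraph.Walk.eq_of_length_eq_zero hm0
      subst hwz
      have hE := edge_step hq hn hqmin_pos hqmin hCD hu h0 hT₁ hT₁₂ (by obtain ⟨_, h⟩ := hadj; exact h)
      simp only [SimpleGraph.Walk.length_cons, hm0]
      norm_num
      linarith
    · have hm1 : (1:ℝ) ≤ (p.length : ℝ) := by exact_mod_cast hmpos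
      have hMpos : (0:ℝ) < (p.length : ℝ) + 1 := by linarith
      obtain ⟨T', hT'def⟩ : ∃ T' : ℝ, T' = T₁ + (T₂ - T₁) / ((p.length : ℝ) + 1) := ⟨_, rfl⟩
      have hstep : 0 < (T₂ - T₁) / ((p.length : ℝ) + 1) := div_pos hΔ hMpos
      have hT'1 : T₁ < T' := by rw [hT'def]; linarith
      have hT'2 : T' < T₂ := by
        rw [hT'def]
        have : (T₂ - T₁) / ((p.length : ℝ) + 1) < T₂ - T₁ :=
          div_lt_self hΔ (by linarith)
        linarith
      have hE := edge_step hq hn hqmin_pos hqmin hCD hu h0 hT₁ hT'1 (by obtain ⟨_, h⟩ := hadj; exact h)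
      have hIH := ih T' T₂ (lt_trans hT₁ hT'1) hT'2
      have hqne : qmin ≠ 0 := ne_of_gt hqmin_pos
      have hΔne : T₂ - T₁ ≠ 0 := ne_of_gt hΔ
      have hmne : (p.length : ℝ) ≠ 0 := by positivity
      have hMne : (p.length : ℝ) + 1 ≠ 0 := ne_of_gt hMpos
      have e1 : T' - T₁ = (T₂ - T₁) / ((p.length : ℝ) + 1) := by rw [hT'def]; ring
      have e2 : T₂ - T' = (T₂ - T₁) * (p.length : ℝ) / ((p.length : ℝ) + 1) := by
        rw [hT'def]; field_simp; ring
      have key : 2 / (qmin * (T' - T₁)) + 2 * (p.length : ℝ) ^ 2 / (qmin * (T₂ - T'))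
          = 2 * ((p.length : ℝ) + 1) ^ 2 / (qmin * (T₂ - T₁)) := by
        rw [e1, e2]
        field_simp
        ring
      simp only [SimpleGraph.Walk.length_cons]
      push_cast
      linarith
end Walk

/-- Parabolic Harnack inequality under CD(0,n) for the modified heat equation. -/
theorem harnack_CD_zero_n {V : Type*} [Fintype V] (q : V → V → ℝ)
    (hq : ∀ x y, 0 ≤ q x y) (hdiag : ∀ x, q x x = 0) (qmin n : ℝ) (hn : 0 < n)
    (hqmin_pos : 0 < qmin) (hqmin : ∀ x y, 0 < q x y → qmin ≤ q x y)
    (hconn : (graphOf q).Connected)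
    (hCD : ∀ f : V → ℝ, ∀ x, (1 / n) * (glap q f x) ^ 2 ≤ gGammaTwo q f x)
    (u : ℝ → V → ℝ)
    (hu : ∀ t ∈ Set.Ici (0 : ℝ), ∀ x, HasDerivWithinAt (fun s => u s x)
      (glap q (u t) x + gGamma q (u t) x) (Set.Ici 0) t)
    (h0 : (⨆ x, gGamma q (u 0) x) ≤ qmin / 2) :
    ∀ x y : V, ∀ T₁ T₂ : ℝ, 0 < T₁ → T₁ < T₂ →
      u T₁ x - u T₂ y ≤ (n / 2) * Real.log (T₂ / T₁)
        + 2 * ((graphOf q).dist x y : ℝ) ^ 2 / (qmin * (T₂ - T₁)) := by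
  have h0' : ∀ x, gGamma q (u 0) x ≤ qmin / 2 := by
    intro x
    refine le_trans ?_ h0
    exact le_ciSup (Set.Finite.bddAbove (Set.finite_range _)) x
  intro x y T₁ T₂ hT₁ hT₁₂
  obtain ⟨p, hp⟩ := hconn.exists_walk_length_eq_dist x y
  have hw := walk_bound hq hn hqmin_pos hqmin hCD hu h0' p T₁ T₂ hT₁ hT₁₂
  rw [hp] at hw
  rw [Real.log_div (ne_of_gt (lt_trans hT₁ hT₁₂)) (ne_of_gt hT₁)]
  exact hw
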